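/- Suppose xr solves the time-varying reduced system of the transformed matrix-interpolation form: (Mᵀ Er T) x̂r' = (Mᵀ Ar T - Mᵀ Wᵀ E V̇(t) T - Mᵀ Er Ṫ(t)) x̂r + Mᵀ Br u, where T : ℝ → Matrix r r ℝ is differentiable and invertible. Then xr(t) := (T t).mulVec (x̂r t) satisfies the untransformed reduced system Er ẋr = (Ar - Wᵀ E V̇(t)) xr + Br u (after left-multiplying by (Mᵀ)⁻¹). -/

import Mathlib

open Matrix

/-- Back-transformation of the time-varying transformed reduced system: if x̂r
solves (Mᵀ Er T) x̂r' = (Mᵀ Ar T - Mᵀ Wᵀ E V̇(t) T - Mᵀ Er Ṫ(t)) x̂r + Mᵀ Br u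
with T(t) differentiable and invertible, then xr := T x̂r solves the
untransformed reduced system Er ẋr = (Ar - Wᵀ E V̇(t)) xr + Br u. -/
theorem back_transformation_time_varying {n m r : ℕ}
    (E : Matrix (Fin n) (Fin n) ℝ) (W V : Matrix (Fin n) (Fin r) ℝ)
    (Vdot : ℝ → Matrix (Fin n) (Fin r) ℝ)
    (Ar : Matrix (Fin r) (Fin r) ℝ) (Br : Matrix (Fin r) (Fin m) ℝ)
    (M : Matrix (Fin r) (Fin r) ℝ) (hM : IsUnit M)
    (T : ℝ → Matrix (Fin r) (Fin r) ℝ)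
    (hT : ∀ i j, Differentiable ℝ (fun s => T s i j))
    (hTinv : ∀ t, IsUnit (T t))
    (u : ℝ → Fin m → ℝ) (xhat : ℝ → Fin r → ℝ) (hxhat : Differentiable ℝ xhat)
    (Er : Matrix (Fin r) (Fin r) ℝ) (hEr : Er = Wᵀ * E * V)
    (hred : ∀ t, (Mᵀ * Er * T t).mulVec (deriv xhat t) =
      (Mᵀ * Ar * T t - Mᵀ * Wᵀ * E * Vdot t * T t
        - Mᵀ * Er * (Matrix.of fun i j => deriv (fun s => T s i j) t)).mulVec (xhat t)
      + (Mᵀ * Br).mulVec (u t)) :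
    ∀ t, Er.mulVec (deriv (fun s => (T s).mulVec (xhat s)) t) =
      (Ar - Wᵀ * E * Vdot t).mulVec ((T t).mulVec (xhat t)) + Br.mulVec (u t) := by
  intro t
  set Td : Matrix (Fin r) (Fin r) ℝ :=
    Matrix.of fun i j => deriv (fun s => T s i j) t with hTd
  -- derivative of the product
  have hxc : ∀ j, HasDerivAt (fun s => xhat s j) (deriv xhat t j) t :=
    fun j => hasDerivAt_pi.mp (hxhat t).hasDerivAt j
  have hder : HasDerivAt (fun s => (T s).mulVec (xhat s))
      (Td.mulVec (xhat t) + (T t).mulVec (deriv xhat t)) t := by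
    rw [hasDerivAt_pi]
    intro i
    have h1 : HasDerivAt (fun s => ∑ j, T s i j * xhat s j)
        (∑ j, (deriv (fun s => T s i j) t * xhat t j + T t i j * deriv xhat t j)) t :=
      HasDerivAt.fun_sum fun j _ => ((hT i j t).hasDerivAt.mul (hxc j))
    have h2 : (Td.mulVec (xhat t) + (T t).mulVec (deriv xhat t)) i =
        ∑ j, (deriv (fun s => T s i j) t * xhat t j + T t i j * deriv xhat t j) := by
      simp [Matrix.mulVec, dotProduct, Finset.sum_add_distrib, hTd]
    rw [h2]
    exact h1
  rw [hder.deriv]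
  -- cancel Mᵀ in the hypothesis
  have hdet : IsUnit (Mᵀ).det := by
    rw [Matrix.det_transpose]
    exact (Matrix.isUnit_iff_isUnit_det M).mp hM
  have hinv : (Mᵀ)⁻¹ * Mᵀ = 1 := Matrix.nonsing_inv_mul _ hdet
  have key : (Er * T t).mulVec (deriv xhat t) =
      (Ar * T t - Wᵀ * E * Vdot t * T t - Er * Td).mulVec (xhat t)
      + Br.mulVec (u t) := by
    have cancel : ∀ v : Fin r → ℝ, ((Mᵀ)⁻¹).mulVec (Mᵀ.mulVec v) = v := fun v => by
      rw [Matrix.mulVec_mulVec, hinv, Matrix.one_mulVec]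
    have h := congrArg (fun v => ((Mᵀ)⁻¹).mulVec v) (hred t)
    simpa only [Matrix.sub_mulVec, ← Matrix.mulVec_mulVec, Matrix.mulVec_sub, Matrix.mulVec_add,
      cancel] using h
  have key2 : Er.mulVec ((T t).mulVec (deriv xhat t)) =
      Ar.mulVec ((T t).mulVec (xhat t))
      - (Wᵀ * E * Vdot t).mulVec ((T t).mulVec (xhat t))
      - Er.mulVec (Td.mulVec (xhat t)) + Br.mulVec (u t) := by
    have := key
    simpa [Matrix.mulVec_mulVec, Matrix.sub_mulVec] using this
  rw [Matrix.mulVec_add, key2, Matrix.sub_mulVec]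
  abel
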